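/- Let E ⊆ ℝ be a measurable set such that L²(E) is invariant under D_μ for all μ ≥ 0 and under multiplication by e^{iλx} for all λ ≥ 0, and L²(E) is nonzero and proper. If additionally L²(E) is invariant under D_μ M_λ for all μ ≥ 0 and λ ≥ 2, then E coincides (up to null sets) with a half-line [t, ∞) for some t ∈ ℝ. -/

import Mathlib

open MeasureTheory Complex Filter Set
open Topology Metric

noncomputable section

abbrev L2 : Type := Lp ℂ 2 (volume : Measure ℝ)

/-- The subspace `L²(E)` of functions supported in `E`. -/
def L2on (E : Set ℝ) : Set L2 := {f : L2 | ∀ᵐ x : ℝ ∂volume, x ∉ E → f x = 0}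

/-- If `L²(E)` is a nonzero proper subspace invariant under all translations `D_μ` (`μ ≥ 0`),
all multiplications `M_λ` (`λ ≥ 0`) and all products `D_μ M_λ` (`μ ≥ 0`, `λ ≥ 2`), then `E`
coincides up to null sets with a half-line `[t, ∞)`. -/
theorem invariant_L2E_is_halfline (E : Set ℝ) (hE : MeasurableSet E)
    (hnonzero : ∃ f ∈ L2on E, f ≠ 0)
    (hproper : ∃ f : L2, f ∉ L2on E)
    (hDinv : ∀ m : ℝ, 0 ≤ m → ∀ D : L2 →L[ℂ] L2,
      (∀ f : L2, ⇑(D f) =ᵐ[volume] fun x : ℝ => f (x - m)) →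
      ∀ f ∈ L2on E, D f ∈ L2on E)
    (hMinv : ∀ l : ℝ, 0 ≤ l → ∀ M : L2 →L[ℂ] L2,
      (∀ f : L2, ⇑(M f) =ᵐ[volume] fun x : ℝ => Complex.exp (Complex.I * l * x) * f x) →
      ∀ f ∈ L2on E, M f ∈ L2on E)
    (hDMinv : ∀ m l : ℝ, 0 ≤ m → 2 ≤ l → ∀ D M : L2 →L[ℂ] L2,
      (∀ f : L2, ⇑(D f) =ᵐ[volume] fun x : ℝ => f (x - m)) →
      (∀ f : L2, ⇑(M f) =ᵐ[volume] fun x : ℝ => Complex.exp (Complex.I * l * x) * f x) →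
      ∀ f ∈ L2on E, (D.comp M) f ∈ L2on E) :
    ∃ t : ℝ, E =ᵐ[volume] Set.Ici t := by
  -- E has positive measure
  have hEpos : volume E ≠ 0 := by
    intro h
    obtain ⟨f, hf, hf0⟩ := hnonzero
    apply hf0
    rw [Lp.eq_zero_iff_ae_eq_zero]
    have hae : ∀ᵐ x : ℝ ∂volume, x ∉ E := by
      rw [ae_iff]; simpa using h
    filter_upwards [hf, hae] with x h1 h2
    exact h1 h2
  -- Eᶜ has positive measure
  have hEc : volume Eᶜ ≠ 0 := by
    intro h
    obtain ⟨f, hf⟩ := hproper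
    apply hf
    have hae : ∀ᵐ x : ℝ ∂volume, x ∈ E := by
      rw [ae_iff]; exact h
    filter_upwards [hae] with x h1 h2
    exact absurd h1 h2
  -- a.e. shift property
  have hshift : ∀ m : ℝ, 0 ≤ m → ∀ᵐ x : ℝ ∂volume, x - m ∈ E → x ∈ E := by
    intro m hm
    have hτ : MeasurePreserving (fun x : ℝ => x - m) volume volume :=
      measurePreserving_sub_right volume m
    set D : L2 →L[ℂ] L2 :=
      (Lp.compMeasurePreservingₗᵢ (p := 2) (E := ℂ) ℂ (fun x : ℝ => x - m)
        hτ).toContinuousLinearMap with hDdef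
    have hD : ∀ f : L2, ⇑(D f) =ᵐ[volume] fun x : ℝ => f (x - m) := fun f =>
      Lp.coeFn_compMeasurePreserving f hτ
    have key : ∀ n : ℕ, ∀ᵐ x : ℝ ∂volume, x ∉ E → x - m ∉ E ∩ Icc (-(n:ℝ)) n := by
      intro n
      have hAm : MeasurableSet (E ∩ Icc (-(n:ℝ)) n) := hE.inter measurableSet_Icc
      have hAf : volume (E ∩ Icc (-(n:ℝ)) n) ≠ ⊤ :=
        (lt_of_le_of_lt (measure_mono inter_subset_right)
          (by rw [Real.volume_Icc]; exact ENNReal.ofReal_lt_top)).ne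
      set g : L2 := indicatorConstLp 2 hAm hAf (1 : ℂ) with hg
      have hgmem : g ∈ L2on E := by
        filter_upwards [indicatorConstLp_coeFn (p := 2) (hs := hAm) (hμs := hAf) (c := (1:ℂ))]
          with x hx hxE
        rw [hx, Set.indicator_of_notMem (fun hc => hxE hc.1)]
      have hmem := hDinv m hm D hD g hgmem
      have h2 : (fun x : ℝ => g (x - m)) =ᵐ[volume]
          fun x : ℝ => (E ∩ Icc (-(n:ℝ)) n).indicator (fun _ => (1:ℂ)) (x - m) :=
        hτ.quasiMeasurePreserving.ae_eq_comp
          (indicatorConstLp_coeFn (p := 2) (hs := hAm) (hμs := hAf) (c := (1:ℂ)))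
      filter_upwards [hmem, hD g, h2] with x h1 h3 h4 hxE hxA
      have := h1 hxE
      rw [h3, h4, Set.indicator_of_mem hxA] at this
      exact one_ne_zero this
    rw [← ae_all_iff] at key
    filter_upwards [key] with x hx hxm
    by_contra hxE
    have h1 : |x - m| ≤ (⌈|x - m|⌉₊ : ℝ) := Nat.le_ceil _
    exact hx ⌈|x - m|⌉₊ hxE ⟨hxm, abs_le.mp h1⟩
  -- null translate difference
  have hnull : ∀ m : ℝ, 0 ≤ m → volume ({x : ℝ | x - m ∈ E} \ E) = 0 := by
    intro m hm
    have := ae_iff.mp (hshift m hm)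
    refine measure_mono_null ?_ this
    intro x hx
    simp only [Set.mem_setOf_eq, Classical.not_imp]
    exact ⟨hx.1, hx.2⟩
  -- monotonicity of measure in balls
  have hmono : ∀ (r : ℝ) (x y : ℝ), x ≤ y →
      volume (E ∩ closedBall x r) ≤ volume (E ∩ closedBall y r) := by
    intro r x y hxy
    set m := y - x with hmdef
    have hm : 0 ≤ m := by simp [hmdef, hxy]
    have hτ : MeasurePreserving (fun z : ℝ => z - m) volume volume :=
      measurePreserving_sub_right volume m
    have h1 : volume (E ∩ closedBall x r)
        = volume ((fun z : ℝ => z - m) ⁻¹' (E ∩ closedBall x r)) :=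
      (hτ.measure_preimage (hE.inter measurableSet_closedBall).nullMeasurableSet).symm
    rw [h1]
    have hsub : (fun z : ℝ => z - m) ⁻¹' (E ∩ closedBall x r)
        ⊆ ({z : ℝ | z - m ∈ E} \ E) ∪ (E ∩ closedBall y r) := by
      intro z hz
      have hzb : z ∈ closedBall y r := by
        have : |z - m - x| ≤ r := by
          have := hz.2
          rwa [Metric.mem_closedBall, Real.dist_eq] at this
        rw [Metric.mem_closedBall, Real.dist_eq]
        have heq : z - m - x = z - y := by rw [hmdef]; ring
        rwa [heq] at this
      by_cases hzE : z ∈ E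
      · exact Or.inr ⟨hzE, hzb⟩
      · exact Or.inl ⟨hz.1, hzE⟩
    calc volume ((fun z : ℝ => z - m) ⁻¹' (E ∩ closedBall x r))
        ≤ volume (({z : ℝ | z - m ∈ E} \ E) ∪ (E ∩ closedBall y r)) := measure_mono hsub
      _ ≤ volume ({z : ℝ | z - m ∈ E} \ E) + volume (E ∩ closedBall y r) := measure_union_le _ _
      _ = volume (E ∩ closedBall y r) := by rw [hnull m hm, zero_add]
  -- density theorem
  have hr : Tendsto (fun n : ℕ => ((n:ℝ)+1)⁻¹) atTop (𝓝[>] 0) :=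
    tendsto_nhdsWithin_of_tendsto_nhds_of_eventually_within _
      (by simpa only [one_div] using (tendsto_one_div_add_atTop_nhds_zero_nat : Tendsto (fun n : ℕ => 1 / ((n:ℝ) + 1)) atTop (𝓝 0)))
      (Eventually.of_forall fun n => Set.mem_Ioi.mpr (by positivity))
  set ratio : ℕ → ℝ → ENNReal := fun n x =>
    volume (E ∩ closedBall x (((n:ℝ)+1)⁻¹)) / volume (closedBall x (((n:ℝ)+1)⁻¹)) with hratio
  have hconv : ∀ᵐ x : ℝ ∂volume,
      Tendsto (fun n => ratio n x) atTop (𝓝 (E.indicator 1 x)) := by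
    filter_upwards [Besicovitch.ae_tendsto_measure_inter_div_of_measurableSet volume hE]
      with x hx
    exact hx.comp hr
  set S : Set ℝ := {x | Tendsto (fun n => ratio n x) atTop (𝓝 (E.indicator 1 x))} with hSdef
  have hS : volume Sᶜ = 0 := by
    have := ae_iff.mp hconv
    simpa [hSdef, Set.compl_def] using this
  -- monotonicity of indicator on S
  have hup : ∀ x ∈ S, ∀ y ∈ S, x ≤ y → x ∈ E → y ∈ E := by
    intro x hx y hy hxy hxE
    by_contra hyE
    have hle : E.indicator (1 : ℝ → ENNReal) x ≤ E.indicator 1 y := by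
      refine le_of_tendsto_of_tendsto' hx hy fun n => ?_
      simp only [hratio]
      rw [Real.volume_closedBall, Real.volume_closedBall]
      exact ENNReal.div_le_div_right (hmono _ x y hxy) _
    rw [Set.indicator_of_mem hxE, Set.indicator_of_notMem hyE] at hle
    simp at hle
  -- S ∩ E and S \ E are nonempty
  have hSE : (S ∩ E).Nonempty := by
    rw [Set.nonempty_iff_ne_empty]
    intro h
    apply hEpos
    refine measure_mono_null (fun x hx => ?_) hS
    intro hxS
    exact Set.eq_empty_iff_forall_notMem.mp h x ⟨hxS, hx⟩
  have hSEc : (S \ E).Nonempty := by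
    rw [Set.nonempty_iff_ne_empty]
    intro h
    apply hEc
    refine measure_mono_null (fun x hx => ?_) hS
    intro hxS
    exact Set.eq_empty_iff_forall_notMem.mp h x ⟨hxS, hx⟩
  obtain ⟨a, haS, haE⟩ := hSE
  obtain ⟨b, hbS, hbE⟩ := hSEc
  have hbdd : BddBelow (S ∩ E) := by
    refine ⟨b, fun x hx => ?_⟩
    by_contra hbx
    push_neg at hbx
    exact hbE (hup x hx.1 b hbS hbx.le hx.2)
  set t := sInf (S ∩ E) with ht
  refine ⟨t, (ae_eq_set).mpr ⟨?_, ?_⟩⟩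
  · -- E \ Ici t is null
    refine measure_mono_null (fun x hx => ?_) hS
    intro hxS
    have : t ≤ x := csInf_le hbdd ⟨hxS, hx.1⟩
    exact hx.2 this
  · -- Ici t \ E is null
    have hsub : Set.Ici t \ E ⊆ Sᶜ ∪ {t} := by
      intro x hx
      by_cases hxS : x ∈ S
      · right
        by_contra hxt
        have hlt : t < x := lt_of_le_of_ne hx.1 (Ne.symm (by simpa using hxt))
        obtain ⟨z, hz, hzx⟩ := exists_lt_of_csInf_lt (s := S ∩ E) (Set.nonempty_of_mem (Set.mem_inter haS haE)) hlt
        exact hx.2 (hup z hz.1 x hxS hzx.le hz.2)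
      · exact Or.inl hxS
    exact measure_mono_null hsub (measure_union_null hS (measure_singleton t))
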